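/- An abelian subgroup S of the n-qubit Pauli group that does not contain -I has a common +1 eigenspace of dimension 2^{n - D(S)}, where D(S) is the minimal number of generators of S. -/

import Mathlib

/-- The four single-qubit Pauli matrices I, X, Y, Z. -/
def pauliMat : Fin 4 → Matrix (Fin 2) (Fin 2) ℂ
  | 0 => 1
  | 1 => !![0, 1; 1, 0]
  | 2 => !![0, -Complex.I; Complex.I, 0]
  | 3 => !![1, 0; 0, -1]

/-- The n-qubit Pauli operator (tensor product of single-qubit Paulis) labelled by
p : Fin n → Fin 4. -/
noncomputable def pauliOp (n : ℕ) (p : Fin n → Fin 4) :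
    Matrix (Fin n → Fin 2) (Fin n → Fin 2) ℂ :=
  Matrix.of fun i j => ∏ k, pauliMat (p k) (i k) (j k)

lemma pauliMat_mul_self (j : Fin 4) : pauliMat j * pauliMat j = 1 := by
  fin_cases j <;>
    · ext a b
      fin_cases a <;> fin_cases b <;>
        simp [pauliMat, Matrix.mul_apply, Fin.sum_univ_two, Matrix.one_apply,
          Complex.I_mul_I]

lemma trace_pauliMat (j : Fin 4) (hj : j ≠ 0) : Matrix.trace (pauliMat j) = 0 := by
  fin_cases j <;> simp_all [pauliMat, Matrix.trace, Matrix.diag, Fin.sum_univ_two]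

lemma pauliOp_mul (n : ℕ) (p q : Fin n → Fin 4) :
    pauliOp n p * pauliOp n q =
      Matrix.of fun i j => ∏ k, (pauliMat (p k) * pauliMat (q k)) (i k) (j k) := by
  ext i j
  simp only [pauliOp, Matrix.mul_apply, Matrix.of_apply]
  have h := Finset.prod_univ_sum (fun _ : Fin n => (Finset.univ : Finset (Fin 2)))
    (fun k m => pauliMat (p k) (i k) m * pauliMat (q k) m (j k))
  rw [Fintype.piFinset_univ] at h
  rw [h]
  refine Finset.sum_congr rfl fun m _ => ?_
  rw [Finset.prod_mul_distrib]

lemma pauliOp_mul_self (n : ℕ) (p : Fin n → Fin 4) : pauliOp n p * pauliOp n p = 1 := by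
  rw [pauliOp_mul]
  ext i j
  simp only [Matrix.of_apply, pauliMat_mul_self, Matrix.one_apply]
  by_cases h : i = j
  · subst h; simp
  · obtain ⟨k, hk⟩ := Function.ne_iff.mp h
    rw [if_neg h]
    exact Finset.prod_eq_zero (Finset.mem_univ k) (by simp [Matrix.one_apply, hk])

lemma trace_pauliOp (n : ℕ) (p : Fin n → Fin 4) (k : Fin n) (hk : p k ≠ 0) :
    Matrix.trace (pauliOp n p) = 0 := by
  have : Matrix.trace (pauliOp n p) = ∏ k, Matrix.trace (pauliMat (p k)) := by
    simp only [Matrix.trace, Matrix.diag, pauliOp, Matrix.of_apply]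
    have h := Finset.prod_univ_sum (fun _ : Fin n => (Finset.univ : Finset (Fin 2)))
      (fun k m => pauliMat (p k) m m)
    rw [Fintype.piFinset_univ] at h
    rw [h]
  rw [this]
  exact Finset.prod_eq_zero (Finset.mem_univ k) (trace_pauliMat _ hk)

lemma pauliOp_zero (n : ℕ) (p : Fin n → Fin 4) (hp : ∀ k, p k = 0) : pauliOp n p = 1 := by
  ext i j
  simp only [pauliOp, Matrix.of_apply, hp]
  show (∏ k, (1 : Matrix (Fin 2) (Fin 2) ℂ) (i k) (j k)) = _
  by_cases h : i = j
  · subst h; simp [Matrix.one_apply]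
  · obtain ⟨k, hk⟩ := Function.ne_iff.mp h
    rw [Matrix.one_apply, if_neg h]
    exact Finset.prod_eq_zero (Finset.mem_univ k) (by simp [Matrix.one_apply, hk])

/-- An abelian subgroup S of the n-qubit Pauli group that does not contain
-I has a common +1 eigenspace of dimension 2^{n - D(S)}, where D(S) is the minimal number
of generators of S. -/
theorem stabilizer_code_dimension (n : ℕ)
    (S : Subgroup (Matrix (Fin n → Fin 2) (Fin n → Fin 2) ℂ)ˣ)
    (hPauli : ∀ s ∈ S, ∃ (k : Fin 4) (p : Fin n → Fin 4),
      ((s : (Matrix (Fin n → Fin 2) (Fin n → Fin 2) ℂ)ˣ) : Matrix (Fin n → Fin 2) (Fin n → Fin 2) ℂ)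
        = Complex.I ^ (k : ℕ) • pauliOp n p)
    (hab : ∀ a ∈ S, ∀ b ∈ S, a * b = b * a)
    (hneg : ∀ s ∈ S,
      ((s : (Matrix (Fin n → Fin 2) (Fin n → Fin 2) ℂ)ˣ) : Matrix (Fin n → Fin 2) (Fin n → Fin 2) ℂ)
        ≠ -1) :
    Module.finrank ℂ ↥
        (⨅ s ∈ S, Module.End.eigenspace
          (Matrix.mulVecLin
            ((s : (Matrix (Fin n → Fin 2) (Fin n → Fin 2) ℂ)ˣ) : Matrix (Fin n → Fin 2) (Fin n → Fin 2) ℂ))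
          1)
      = 2 ^ (n - sInf {k : ℕ | ∃ t : Finset (Matrix (Fin n → Fin 2) (Fin n → Fin 2) ℂ)ˣ,
          t.card = k ∧ Subgroup.closure (t : Set (Matrix (Fin n → Fin 2) (Fin n → Fin 2) ℂ)ˣ) = S}) := by
  -- Step A : every element of S squares to 1
  have hsq : ∀ s : ↥S, s * s = 1 := by
    intro s
    obtain ⟨k, p, hkp⟩ := hPauli s.1 s.2
    have hval : ((s.1 * s.1 : _ˣ) : Matrix (Fin n → Fin 2) (Fin n → Fin 2) ℂ)
        = (Complex.I ^ (k : ℕ) * Complex.I ^ (k : ℕ)) • 1 := by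
      rw [Units.val_mul, hkp, Matrix.smul_mul, Matrix.mul_smul, smul_smul, pauliOp_mul_self]
    have hcoe : ((s * s : ↥S) : (Matrix (Fin n → Fin 2) (Fin n → Fin 2) ℂ)ˣ)
        = s.1 * s.1 := rfl
    have h4 : (k : ℕ) = 0 ∨ (k : ℕ) = 1 ∨ (k : ℕ) = 2 ∨ (k : ℕ) = 3 := by omega
    rcases h4 with hc | hc | hc | hc <;> rw [hc] at hval
    · refine Subtype.ext (Units.ext ?_)
      rw [hcoe, hval]
      norm_num
    · refine absurd ?_ (hneg _ (mul_mem s.2 s.2))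
      rw [hval]
      norm_num [Complex.I_mul_I]
    · refine Subtype.ext (Units.ext ?_)
      rw [hcoe, hval]
      norm_num [pow_succ, Complex.I_mul_I]
    · refine absurd ?_ (hneg _ (mul_mem s.2 s.2))
      rw [hval]
      norm_num [pow_succ, Complex.I_mul_I]
  -- Step B : trace of non-identity elements is zero
  have htr : ∀ s : ↥S, s ≠ 1 →
      Matrix.trace ((s : (Matrix (Fin n → Fin 2) (Fin n → Fin 2) ℂ)ˣ) :
        Matrix (Fin n → Fin 2) (Fin n → Fin 2) ℂ) = 0 := by
    intro s hs1
    obtain ⟨k, p, hkp⟩ := hPauli s.1 s.2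
    by_cases hp : ∀ j, p j = 0
    · exfalso
      rw [pauliOp_zero n p hp] at hkp
      have hss := hsq s
      have hval : ((s.1 * s.1 : _ˣ) : Matrix (Fin n → Fin 2) (Fin n → Fin 2) ℂ)
          = (Complex.I ^ (k : ℕ) * Complex.I ^ (k : ℕ)) • 1 := by
        rw [Units.val_mul, hkp, smul_mul_smul_comm, one_mul]
      have hval1 : ((s.1 * s.1 : _ˣ) : Matrix (Fin n → Fin 2) (Fin n → Fin 2) ℂ) = 1 := by
        rw [show s.1 * s.1 = ((s * s : ↥S) : _ˣ) from rfl, hss]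
        rfl
      rw [hval1] at hval
      have hone : (1 : Matrix (Fin n → Fin 2) (Fin n → Fin 2) ℂ) ≠ -1 := by
        intro h
        have h2 := congrFun (congrFun h (fun _ => 0)) (fun _ => 0)
        simp [Matrix.one_apply, Matrix.neg_apply] at h2
        norm_num at h2
      have h4 : (k : ℕ) = 0 ∨ (k : ℕ) = 1 ∨ (k : ℕ) = 2 ∨ (k : ℕ) = 3 := by omega
      rcases h4 with hc | hc | hc | hc <;> rw [hc] at hkp hval
      · exact hs1 (Subtype.ext (Units.ext (by simpa using hkp)))
      · exact hone (hval.trans (by norm_num [Complex.I_mul_I]))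
      · exact hneg s.1 s.2 (by rw [hkp]; norm_num [pow_succ, Complex.I_mul_I])
      · exact hone (hval.trans (by norm_num [pow_succ, Complex.I_mul_I]))
    · push_neg at hp
      obtain ⟨j, hj⟩ := hp
      rw [hkp, Matrix.trace_smul, trace_pauliOp n p j hj, smul_zero]
  -- Step C : S is finite
  haveI hSfin : Finite ↥S := by
    have hsub : (S : Set (Matrix (Fin n → Fin 2) (Fin n → Fin 2) ℂ)ˣ) ⊆
        Units.val ⁻¹' ((fun q : Fin 4 × (Fin n → Fin 4) =>
          Complex.I ^ (q.1 : ℕ) • pauliOp n q.2) '' Set.univ) := by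
      intro x hx
      obtain ⟨k, p, hkp⟩ := hPauli x hx
      exact ⟨(k, p), Set.mem_univ _, hkp.symm⟩
    have hfin : (Units.val ⁻¹' ((fun q : Fin 4 × (Fin n → Fin 4) =>
        Complex.I ^ (q.1 : ℕ) • pauliOp n q.2) '' Set.univ)).Finite :=
      Set.Finite.preimage (Function.Injective.injOn (fun _ _ h => Units.ext h)) (Set.finite_univ.image _)
    exact (hfin.subset hsub).to_subtype
  haveI : Fintype ↥S := Fintype.ofFinite _
  -- Step D : module structure over ZMod 2
  letI : CommGroup ↥S :=
    { (inferInstance : Group ↥S) with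
      mul_comm := fun a b => Subtype.ext (hab _ a.2 _ b.2) }
  letI : Module (ZMod 2) (Additive ↥S) := AddCommGroup.zmodModule (by
    intro x
    rw [two_nsmul]
    exact hsq (Additive.toMul x))
  haveI : Module.Finite (ZMod 2) (Additive ↥S) := Module.Finite.of_finite
  set r := Module.finrank (ZMod 2) (Additive ↥S) with hr
  obtain ⟨b⟩ : Nonempty (Module.Basis (Fin r) (ZMod 2) (Additive ↥S)) :=
    ⟨Module.finBasis (ZMod 2) (Additive ↥S)⟩
  have hcard : Fintype.card ↥S = 2 ^ r := by
    have h1 := Module.card_fintype b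
    simpa [ZMod.card] using h1
  -- Step E : the minimal number of generators is r
  have hzmod2 : ∀ c : ZMod 2, c = 0 ∨ c = 1 := by decide
  have hDr : sInf {k : ℕ | ∃ t : Finset (Matrix (Fin n → Fin 2) (Fin n → Fin 2) ℂ)ˣ,
      t.card = k ∧ Subgroup.closure (t : Set (Matrix (Fin n → Fin 2) (Fin n → Fin 2) ℂ)ˣ) = S}
      = r := by
    have hinj : Function.Injective (fun i : Fin r =>
        ((Additive.toMul (b i) : ↥S) : (Matrix (Fin n → Fin 2) (Fin n → Fin 2) ℂ)ˣ)) := by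
      intro i j hij
      exact b.injective (Additive.toMul.injective (Subtype.ext hij))
    have hmem : r ∈ {k : ℕ | ∃ t : Finset (Matrix (Fin n → Fin 2) (Fin n → Fin 2) ℂ)ˣ,
        t.card = k ∧ Subgroup.closure (t : Set (Matrix (Fin n → Fin 2) (Fin n → Fin 2) ℂ)ˣ)
          = S} := by
      set t : Finset (Matrix (Fin n → Fin 2) (Fin n → Fin 2) ℂ)ˣ :=
        Finset.image (fun i => ((Additive.toMul (b i) : ↥S) :
          (Matrix (Fin n → Fin 2) (Fin n → Fin 2) ℂ)ˣ)) Finset.univ with ht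
      refine ⟨t, ?_, ?_⟩
      · rw [ht, Finset.card_image_of_injective _ hinj, Finset.card_univ, Fintype.card_fin]
      · apply le_antisymm
        · rw [Subgroup.closure_le]
          rintro x hx
          rw [ht] at hx
          simp only [Finset.coe_image, Set.mem_image, Finset.coe_univ, Set.mem_univ,
            true_and] at hx
          obtain ⟨i, rfl⟩ := hx
          exact (Additive.toMul (b i)).2
        · intro x hx
          have key : ∀ v : Additive ↥S, ((Additive.toMul v : ↥S) :
              (Matrix (Fin n → Fin 2) (Fin n → Fin 2) ℂ)ˣ) ∈ Subgroup.closure (t : Set _) := by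
            intro v
            have hv : v ∈ Submodule.span (ZMod 2) (Set.range b) := by
              rw [b.span_eq]; trivial
            induction hv using Submodule.span_induction with
            | mem w hw =>
              obtain ⟨i, rfl⟩ := hw
              apply Subgroup.subset_closure
              rw [ht]
              simp only [Finset.coe_image, Set.mem_image, Finset.coe_univ, Set.mem_univ,
                true_and]
              exact ⟨i, rfl⟩
            | zero => exact Subgroup.one_mem _
            | add w₁ w₂ h₁ h₂ ih₁ ih₂ => exact Subgroup.mul_mem _ ih₁ ih₂
            | smul c w hw ih =>
              rcases hzmod2 c with rfl | rfl
              · rw [zero_smul]; exact Subgroup.one_mem _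
              · rw [one_smul]; exact ih
          exact key (Additive.ofMul (⟨x, hx⟩ : ↥S))
    have hlb : ∀ k ∈ {k : ℕ | ∃ t : Finset (Matrix (Fin n → Fin 2) (Fin n → Fin 2) ℂ)ˣ,
        t.card = k ∧ Subgroup.closure (t : Set (Matrix (Fin n → Fin 2) (Fin n → Fin 2) ℂ)ˣ)
          = S}, r ≤ k := by
      rintro k ⟨t, rfl, hclos⟩
      -- every element of S is in t, pull back to a Finset of ↥S
      classical
      have htS : ∀ g ∈ t, g ∈ S := fun g hg => hclos ▸ Subgroup.subset_closure hg
      set t' : Finset ↥S := Finset.univ.filter (fun y : ↥S => (y : _ˣ) ∈ t) with ht'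
      have hcard' : t'.card ≤ t.card := by
        refine Finset.card_le_card_of_injOn (fun y : ↥S => (y : (Matrix (Fin n → Fin 2)
          (Fin n → Fin 2) ℂ)ˣ)) ?_ ?_
        · intro y hy
          rw [ht', Finset.mem_coe, Finset.mem_filter] at hy
          exact hy.2
        · intro y _ z _ h
          exact Subtype.ext h
      -- every element of ↥S is a product of a subset of t'
      have hprod : ∀ y : ↥S, ∃ A : Finset ↥S, A ⊆ t' ∧ A.prod id = y := by
        intro y
        have hy : (y : (Matrix (Fin n → Fin 2) (Fin n → Fin 2) ℂ)ˣ) ∈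
            Subgroup.closure (t : Set _) := by rw [hclos]; exact y.2
        -- induction on closure membership, with the predicate tracking membership in S
        have main : ∀ (x : (Matrix (Fin n → Fin 2) (Fin n → Fin 2) ℂ)ˣ)
            (hx : x ∈ Subgroup.closure (t : Set _)), ∀ hxS : x ∈ S,
            ∃ A : Finset ↥S, A ⊆ t' ∧ A.prod id = ⟨x, hxS⟩ := by
          intro x hx
          induction hx using Subgroup.closure_induction with
          | mem g hg =>
            intro hgS
            refine ⟨{⟨g, hgS⟩}, ?_, by simp⟩
            intro a ha
            rw [Finset.mem_singleton] at ha
            subst ha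
            rw [ht', Finset.mem_filter]
            exact ⟨Finset.mem_univ _, hg⟩
          | one =>
            intro h1S
            exact ⟨∅, Finset.empty_subset _, by simp; rfl⟩
          | mul g₁ g₂ hg₁ hg₂ ih₁ ih₂ =>
            intro hS
            have hS₁ : g₁ ∈ S := hclos ▸ hg₁
            have hS₂ : g₂ ∈ S := hclos ▸ hg₂
            obtain ⟨A, hA, hAp⟩ := ih₁ hS₁
            obtain ⟨B, hB, hBp⟩ := ih₂ hS₂
            refine ⟨symmDiff A B, ?_, ?_⟩
            · intro a ha
              rcases Finset.mem_symmDiff.mp ha with ⟨h, -⟩ | ⟨h, -⟩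
              exacts [hA h, hB h]
            · have e1 := Finset.prod_inter_mul_prod_diff A B id
              have e2 := Finset.prod_inter_mul_prod_diff B A id
              have e3 : (symmDiff A B).prod id = (A \ B).prod id * (B \ A).prod id := by
                rw [symmDiff_def]
                exact Finset.prod_union disjoint_sdiff_sdiff
              have hAB : (symmDiff A B).prod id * ((A ∩ B).prod id) ^ 2
                  = A.prod id * B.prod id := by
                rw [e3, sq, ← e1, ← e2, Finset.inter_comm B A]
                ac_rfl
              have hsq1 : ((A ∩ B).prod id) ^ 2 = 1 := by
                rw [sq]
                exact hsq _
              rw [hsq1, mul_one] at hAB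
              rw [hAB, hAp, hBp]
              rfl
          | inv g hg ih =>
            intro hS'
            have hgS : g ∈ S := hclos ▸ hg
            obtain ⟨A, hA, hAp⟩ := ih hgS
            refine ⟨A, hA, ?_⟩
            rw [hAp]
            have : (⟨g, hgS⟩ : ↥S)⁻¹ = ⟨g⁻¹, hS'⟩ := rfl
            rw [← this, inv_eq_of_mul_eq_one_left (hsq ⟨g, hgS⟩)]
        obtain ⟨A, hA, hAp⟩ := main _ hy y.2
        exact ⟨A, hA, by rw [hAp]⟩
      -- hence |S| ≤ 2 ^ |t|
      have hsurj : Function.Surjective (fun A : {A : Finset ↥S // A ∈ t'.powerset} =>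
          (A : Finset ↥S).prod id) := by
        intro y
        obtain ⟨A, hA, hAp⟩ := hprod y
        exact ⟨⟨A, Finset.mem_powerset.mpr hA⟩, hAp⟩
      have hle : Fintype.card ↥S ≤ 2 ^ t'.card := by
        have h0 : Fintype.card {A : Finset ↥S // A ∈ t'.powerset} = 2 ^ t'.card := by
          rw [Fintype.card_coe, Finset.card_powerset]
        exact h0 ▸ Fintype.card_le_of_surjective _ hsurj
      have : 2 ^ r ≤ 2 ^ t.card := by
        rw [← hcard]
        exact hle.trans (Nat.pow_le_pow_right (by norm_num) hcard')
      exact (Nat.pow_le_pow_iff_right (by norm_num)).mp this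
    exact le_antisymm (Nat.sInf_le hmem) (le_csInf ⟨r, hmem⟩ hlb)
  rw [hDr]
  -- Step F : the projector onto the common +1 eigenspace
  have hsum : (∑ s : ↥S, Matrix.trace ((s : (Matrix (Fin n → Fin 2) (Fin n → Fin 2) ℂ)ˣ) :
      Matrix (Fin n → Fin 2) (Fin n → Fin 2) ℂ)) = (2 : ℂ) ^ n := by
    rw [Fintype.sum_eq_single (1 : ↥S) (fun s hs => htr s hs)]
    have : (((1 : ↥S) : (Matrix (Fin n → Fin 2) (Fin n → Fin 2) ℂ)ˣ) :
        Matrix (Fin n → Fin 2) (Fin n → Fin 2) ℂ) = 1 := rfl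
    rw [this, Matrix.trace_one]
    rw [Fintype.card_fun]
    push_cast
    simp
  set N : ℂ := (Fintype.card ↥S : ℂ) with hNdef
  have hN : N ≠ 0 := by
    rw [hNdef]
    exact_mod_cast Nat.cast_ne_zero.mpr Fintype.card_ne_zero
  set T : Matrix (Fin n → Fin 2) (Fin n → Fin 2) ℂ :=
    ∑ s : ↥S, ((s : (Matrix (Fin n → Fin 2) (Fin n → Fin 2) ℂ)ˣ) :
      Matrix (Fin n → Fin 2) (Fin n → Fin 2) ℂ) with hT
  set P : Matrix (Fin n → Fin 2) (Fin n → Fin 2) ℂ := N⁻¹ • T with hPdef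
  have hmulP : ∀ s0 : ↥S, ((s0 : (Matrix (Fin n → Fin 2) (Fin n → Fin 2) ℂ)ˣ) :
      Matrix (Fin n → Fin 2) (Fin n → Fin 2) ℂ) * P = P := by
    intro s0
    rw [hPdef, Matrix.mul_smul, hT, Finset.mul_sum]
    congr 1
    have hre : ∀ s : ↥S, ((s0 : (Matrix (Fin n → Fin 2) (Fin n → Fin 2) ℂ)ˣ) :
        Matrix (Fin n → Fin 2) (Fin n → Fin 2) ℂ) * ((s : (Matrix (Fin n → Fin 2)
          (Fin n → Fin 2) ℂ)ˣ) : Matrix (Fin n → Fin 2) (Fin n → Fin 2) ℂ)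
        = (((s0 * s : ↥S) : (Matrix (Fin n → Fin 2) (Fin n → Fin 2) ℂ)ˣ) :
          Matrix (Fin n → Fin 2) (Fin n → Fin 2) ℂ) := fun s => rfl
    calc ∑ s : ↥S, ((s0 : (Matrix (Fin n → Fin 2) (Fin n → Fin 2) ℂ)ˣ) :
          Matrix (Fin n → Fin 2) (Fin n → Fin 2) ℂ) * ((s : (Matrix (Fin n → Fin 2)
          (Fin n → Fin 2) ℂ)ˣ) : Matrix (Fin n → Fin 2) (Fin n → Fin 2) ℂ)
        = ∑ s : ↥S, (((s0 * s : ↥S) : (Matrix (Fin n → Fin 2) (Fin n → Fin 2) ℂ)ˣ) :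
            Matrix (Fin n → Fin 2) (Fin n → Fin 2) ℂ) := by
          exact Finset.sum_congr rfl fun s _ => hre s
      _ = ∑ s : ↥S, ((s : (Matrix (Fin n → Fin 2) (Fin n → Fin 2) ℂ)ˣ) :
            Matrix (Fin n → Fin 2) (Fin n → Fin 2) ℂ) :=
          Fintype.sum_equiv (Equiv.mulLeft s0) _ _ (fun s => rfl)
  have hsum_mulVec : ∀ x : (Fin n → Fin 2) → ℂ, T.mulVec x
      = ∑ s : ↥S, ((s : (Matrix (Fin n → Fin 2) (Fin n → Fin 2) ℂ)ˣ) :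
        Matrix (Fin n → Fin 2) (Fin n → Fin 2) ℂ).mulVec x := by
    intro x
    rw [hT]
    exact map_sum (AddMonoidHom.mk' (fun A : Matrix (Fin n → Fin 2) (Fin n → Fin 2) ℂ =>
      A.mulVec x) (fun A B => Matrix.add_mulVec A B x)) _ Finset.univ
  -- the common eigenspace
  set E : Submodule ℂ ((Fin n → Fin 2) → ℂ) := ⨅ s ∈ S, Module.End.eigenspace
    (Matrix.mulVecLin ((s : (Matrix (Fin n → Fin 2) (Fin n → Fin 2) ℂ)ˣ) :
      Matrix (Fin n → Fin 2) (Fin n → Fin 2) ℂ)) 1 with hE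
  have hmemE : ∀ x : (Fin n → Fin 2) → ℂ, x ∈ E ↔ ∀ s : ↥S,
      ((s : (Matrix (Fin n → Fin 2) (Fin n → Fin 2) ℂ)ˣ) :
        Matrix (Fin n → Fin 2) (Fin n → Fin 2) ℂ).mulVec x = x := by
    intro x
    rw [hE]
    simp only [Submodule.mem_iInf, Module.End.mem_eigenspace_iff, one_smul,
      Matrix.mulVecLin_apply]
    exact ⟨fun h s => h s.1 s.2, fun h g hg => h ⟨g, hg⟩⟩
  have hproj : LinearMap.IsProj E (Matrix.mulVecLin P) := by
    constructor
    · intro x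
      rw [hmemE]
      intro s
      rw [Matrix.mulVecLin_apply, Matrix.mulVec_mulVec, hmulP s]
    · intro x hx
      rw [hmemE] at hx
      rw [Matrix.mulVecLin_apply, hPdef, Matrix.smul_mulVec, hsum_mulVec]
      have : ∀ s : ↥S, ((s : (Matrix (Fin n → Fin 2) (Fin n → Fin 2) ℂ)ˣ) :
          Matrix (Fin n → Fin 2) (Fin n → Fin 2) ℂ).mulVec x = x := hx
      rw [Finset.sum_congr rfl fun s _ => this s, Finset.sum_const, Finset.card_univ,
        ← Nat.cast_smul_eq_nsmul ℂ, smul_smul, hNdef, inv_mul_cancel₀ hN, one_smul]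
  -- trace computation
  have htrP : LinearMap.trace ℂ _ (Matrix.mulVecLin P) = N⁻¹ * 2 ^ n := by
    rw [LinearMap.trace_eq_matrix_trace ℂ (Pi.basisFun ℂ (Fin n → Fin 2)),
      LinearMap.toMatrix_eq_toMatrix']
    rw [show Matrix.mulVecLin P = Matrix.toLin' P from rfl, LinearMap.toMatrix'_toLin']
    rw [hPdef, Matrix.trace_smul, hT, Matrix.trace_sum, hsum, smul_eq_mul]
  have hfr := LinearMap.IsProj.trace hproj
  rw [htrP] at hfr
  -- Step G : arithmetic
  have hnat : Module.finrank ℂ ↥E * 2 ^ r = 2 ^ n := by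
    have hc : ((Module.finrank ℂ ↥E * 2 ^ r : ℕ) : ℂ) = ((2 ^ n : ℕ) : ℂ) := by
      push_cast
      rw [← hfr]
      have hN2 : N = (2 : ℂ) ^ r := by
        rw [hNdef, hcard]
        push_cast
        ring
      rw [hN2]
      field_simp
    exact_mod_cast hc
  have hfr0 : Module.finrank ℂ ↥E ≠ 0 := by
    intro h0
    rw [h0, zero_mul] at hnat
    exact absurd hnat.symm (pow_ne_zero n (by norm_num))
  have hrn : r ≤ n := by
    have h2 : 2 ^ r ≤ 2 ^ n := by
      calc 2 ^ r ≤ Module.finrank ℂ ↥E * 2 ^ r :=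
  Nat.le_mul_of_pos_left _ (Nat.pos_of_ne_zero hfr0)
        _ = 2 ^ n := hnat
    exact (Nat.pow_le_pow_iff_right (by norm_num)).mp h2
  have : Module.finrank ℂ ↥E * 2 ^ r = 2 ^ (n - r) * 2 ^ r := by
    rw [hnat, ← pow_add, Nat.sub_add_cancel hrn]
  exact Nat.eq_of_mul_eq_mul_right (by positivity) this
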